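/- Let 1 ≤ i < j ≤ n with i + j = n + 2, let c′ be the (i,j)-interchange of c, and u = ⌈n/2⌉. Then f(c′) − f(c) = (2(c_{n+2−i} − c_i)/n²)·( (n+2−2i)·Σ_{k=2}^{i−1} (k−1)(c_k − c_{n+2−k}) + (i−1)·Σ_{k=i+1}^{u} (n+2−2k)(c_k − c_{n+2−k}) ). -/

import Mathlib

open Finset

/-- Partial sums of the sequence `c` (1-indexed): `partSum c k = c 1 + ⋯ + c k`. -/
noncomputable def partSum (c : ℕ → ℝ) (k : ℕ) : ℝ := ∑ i ∈ Finset.Icc 1 k, c i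

/-- The mean `S̄` of the partial sums `s_1, …, s_n`. -/
noncomputable def meanPS (n : ℕ) (c : ℕ → ℝ) : ℝ :=
  (1 / (n : ℝ)) * ∑ k ∈ Finset.Icc 1 n, partSum c k

/-- The variance `f(c)` of the partial sums `s_1, …, s_n`. -/
noncomputable def varPS (n : ℕ) (c : ℕ → ℝ) : ℝ :=
  (1 / (n : ℝ)) * ∑ k ∈ Finset.Icc 1 n, (partSum c k - meanPS n c) ^ 2

/-- The `(i,j)`-partial mean `μ_{ij}(S) = (1/(j-i)) ∑_{k=i}^{j-1} s_k`. -/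
noncomputable def partMean (c : ℕ → ℝ) (i j : ℕ) : ℝ :=
  (1 / ((j : ℝ) - (i : ℝ))) * ∑ k ∈ Finset.Icc i (j - 1), partSum c k

/-- The `(i,j)`-interchange of `c`: swap the entries in positions `i` and `j`. -/
noncomputable def swapSeq (c : ℕ → ℝ) (i j : ℕ) : ℕ → ℝ := fun k => c (Equiv.swap i j k)

/-- `c` is an arrangement (permutation) of `a` on the index range `1..n`. -/
def IsArrangement (n : ℕ) (a c : ℕ → ℝ) : Prop :=
  ∃ σ : ℕ → ℕ, Set.BijOn σ (Set.Icc 1 n) (Set.Icc 1 n) ∧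
    ∀ k ∈ Set.Icc 1 n, c k = a (σ k)

/-- The dual sequence `c^d = (c_1, c_n, c_{n-1}, …, c_2)`. -/
noncomputable def dualSeq (n : ℕ) (c : ℕ → ℝ) : ℕ → ℝ :=
  fun k => if 2 ≤ k then c (n + 2 - k) else c k

lemma varPS_eq (n : ℕ) (hn : 0 < n) (c : ℕ → ℝ) :
    varPS n c = (1 / (n:ℝ)) * ∑ k ∈ Icc 1 n, (partSum c k) ^ 2 - (meanPS n c) ^ 2 := by
  have hcard : (Icc 1 n).card = n := by simp
  have hS : ∑ k ∈ Icc 1 n, partSum c k = (n:ℝ) * meanPS n c := by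
    unfold meanPS; field_simp
  have hn' : (n:ℝ) ≠ 0 := Nat.cast_ne_zero.mpr hn.ne'
  unfold varPS
  have : ∑ k ∈ Icc 1 n, (partSum c k - meanPS n c) ^ 2
      = ∑ k ∈ Icc 1 n, (partSum c k)^2 - 2 * meanPS n c * ∑ k ∈ Icc 1 n, partSum c k
        + (n:ℝ) * (meanPS n c)^2 := by
    rw [Finset.sum_congr rfl (fun k _ => sub_sq (partSum c k) (meanPS n c)),
      Finset.sum_add_distrib, Finset.sum_sub_distrib, Finset.sum_const, hcard, nsmul_eq_mul]
    rw [show ∑ x ∈ Icc 1 n, 2 * partSum c x * meanPS n c = 2 * meanPS n c * ∑ x ∈ Icc 1 n, partSum c x by rw [Finset.mul_sum]; exact Finset.sum_congr rfl fun x _ => by ring]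
  rw [this, hS]
  field_simp
  ring

lemma partSum_swap (c : ℕ → ℝ) (i j k : ℕ) (hi : 1 ≤ i) (hij : i < j) :
    partSum (swapSeq c i j) k
      = partSum c k + (if i ≤ k ∧ k < j then c j - c i else 0) := by
  unfold partSum swapSeq
  rcases lt_or_ge k i with hk | hk
  · rw [if_neg (by omega)]
    rw [add_zero]
    refine Finset.sum_congr rfl fun l hl => ?_
    simp only [mem_Icc] at hl
    rw [Equiv.swap_apply_of_ne_of_ne (by omega) (by omega)]
  · rcases lt_or_ge k j with hk2 | hk2
    · rw [if_pos ⟨hk, hk2⟩]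
      have hmem : i ∈ Icc 1 k := by simp [mem_Icc]; omega
      rw [← Finset.add_sum_erase _ _ hmem, ← Finset.add_sum_erase _ _ hmem]
      have : ∑ l ∈ (Icc 1 k).erase i, c (Equiv.swap i j l)
          = ∑ l ∈ (Icc 1 k).erase i, c l := by
        refine Finset.sum_congr rfl fun l hl => ?_
        have h1 := Finset.ne_of_mem_erase hl
        have h2 := Finset.mem_of_mem_erase hl
        simp only [mem_Icc] at h2
        rw [Equiv.swap_apply_of_ne_of_ne h1 (by omega)]
      rw [this, Equiv.swap_apply_left]
      ring
    · rw [if_neg (by omega), add_zero]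
      refine Finset.sum_equiv (Equiv.swap i j) (fun l => ?_) (fun l _ => rfl)
      simp only [mem_Icc]
      rcases eq_or_ne l i with rfl | h1
      · rw [Equiv.swap_apply_left]; omega
      rcases eq_or_ne l j with rfl | h2
      · rw [Equiv.swap_apply_right]; omega
      · rw [Equiv.swap_apply_of_ne_of_ne h1 h2]

lemma sum_Icc_partSum (c : ℕ → ℝ) (a b n : ℕ) (hb : b ≤ n) :
    ∑ k ∈ Icc a b, partSum c k
      = ∑ l ∈ Icc 1 n, ((Icc (max a l) b).card : ℝ) * c l := by
  unfold partSum
  have h1 : ∀ k ∈ Icc a b, ∑ l ∈ Icc 1 k, c l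
      = ∑ l ∈ Icc 1 n, if l ≤ k then c l else 0 := by
    intro k hk
    simp only [mem_Icc] at hk
    rw [← Finset.sum_filter]
    congr 1
    ext l
    simp only [mem_Icc, mem_filter]
    omega
  rw [Finset.sum_congr rfl h1, Finset.sum_comm]
  refine Finset.sum_congr rfl fun l _ => ?_
  have : (Icc a b).filter (fun k => l ≤ k) = Icc (max a l) b := by
    ext k; simp only [mem_Icc, mem_filter]; omega
  rw [← Finset.sum_filter, this, Finset.sum_const, nsmul_eq_mul]

/-- weight function -/
noncomputable def wgt (n i j : ℕ) : ℕ → ℝ := fun l =>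
  if l < i then 2 * ((j:ℝ) - i) * ((l:ℝ) - 1)
  else if l = i then 0
  else if l < j then 2 * ((i:ℝ) - 1) * ((n:ℝ) + 2 - 2 * l)
  else if l = j then 0
  else (-2) * ((j:ℝ) - i) * ((n:ℝ) + 1 - l)

lemma sum_mirror (n a b : ℕ) (hb : b ≤ n) (f : ℕ → ℝ) :
    ∑ k ∈ Icc a b, f (n + 2 - k) = ∑ l ∈ Icc (n + 2 - b) (n + 2 - a), f l := by
  refine Finset.sum_nbij' (fun k => n + 2 - k) (fun l => n + 2 - l) ?_ ?_ ?_ ?_ ?_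
  · intro k hk; simp only [mem_Icc] at *; omega
  · intro l hl; simp only [mem_Icc] at *; omega
  · intro k hk; simp only [mem_Icc] at hk; omega
  · intro l hl; simp only [mem_Icc] at hl; omega
  · intro k hk; rfl

lemma sum_ite_Icc (a b n : ℕ) (ha : 1 ≤ a) (hb : b ≤ n) (f : ℕ → ℝ) :
    ∑ l ∈ Icc 1 n, (if a ≤ l ∧ l ≤ b then f l else 0) = ∑ l ∈ Icc a b, f l := by
  rw [← Finset.sum_filter]
  congr 1
  ext l; simp only [mem_Icc, mem_filter]; omega

lemma keyL (n i j : ℕ) (c : ℕ → ℝ) (hi : 1 ≤ i) (hij : i < j) (hj : j ≤ n)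
    (hsum : i + j = n + 2) :
    2 * ((n:ℝ) * (∑ k ∈ Icc i (j-1), partSum c k)
        - ((j:ℝ) - i) * (∑ k ∈ Icc 1 n, partSum c k))
      + ((j:ℝ) - i) * ((n:ℝ) - ((j:ℝ) - i)) * (c j - c i)
    = ∑ l ∈ Icc 1 n, wgt n i j l * c l := by
  have hR : (i:ℝ) + j = (n:ℝ) + 2 := by exact_mod_cast congrArg (Nat.cast (R := ℝ)) hsum
  rw [sum_Icc_partSum c i (j-1) n (by omega), sum_Icc_partSum c 1 n n le_rfl]
  have hcj : c j = ∑ l ∈ Icc 1 n, (if l = j then c l else 0) := by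
    rw [Finset.sum_ite_eq' (Icc 1 n) j c, if_pos (by simp only [mem_Icc]; omega)]
  have hci : c i = ∑ l ∈ Icc 1 n, (if l = i then c l else 0) := by
    rw [Finset.sum_ite_eq' (Icc 1 n) i c, if_pos (by simp only [mem_Icc]; omega)]
  rw [hcj, hci, Finset.mul_sum, Finset.mul_sum, ← Finset.sum_sub_distrib, Finset.mul_sum,
    ← Finset.sum_sub_distrib, Finset.mul_sum, ← Finset.sum_add_distrib]
  refine Finset.sum_congr rfl fun l hl => ?_
  simp only [mem_Icc] at hl
  obtain ⟨hl1, hl2⟩ := hl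
  have hmax1 : max 1 l = l := by omega
  have hcardS : (Icc (max 1 l) n).card = n + 1 - l := by
    rw [hmax1]; simp [Nat.card_Icc]
  rw [hcardS]
  rcases lt_trichotomy l i with h | h | h
  · have hcT : (Icc (max i l) (j-1)).card = j - i := by
      simp only [Nat.card_Icc]; omega
    have hw : wgt n i j l = 2 * ((j:ℝ) - i) * ((l:ℝ) - 1) := by
      unfold wgt; rw [if_pos h]
    have e1 : (if l = j then c l else 0) = 0 := if_neg (by omega)
    have e2 : (if l = i then c l else 0) = 0 := if_neg (by omega)
    rw [hcT, hw, e1, e2]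
    push_cast [Nat.cast_sub (by omega : i ≤ j), Nat.cast_sub (by omega : l ≤ n + 1)]
    ring
  · have hcT : (Icc (max i l) (j-1)).card = j - i := by
      simp only [Nat.card_Icc]; omega
    have hw : wgt n i j l = 0 := by
      unfold wgt; rw [if_neg (by omega), if_pos h]
    have e1 : (if l = j then c l else 0) = 0 := if_neg (by omega)
    have e2 : (if l = i then c l else 0) = c l := if_pos h
    rw [hcT, hw, e1, e2]
    have hlR : (l:ℝ) = i := by exact_mod_cast congrArg (Nat.cast (R := ℝ)) h
    push_cast [Nat.cast_sub (by omega : i ≤ j), Nat.cast_sub (by omega : l ≤ n + 1)]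
    linear_combination (((j:ℝ) - i) * c l) * hR + (2 * ((j:ℝ) - i) * c l) * hlR
  · rcases lt_trichotomy l j with h2 | h2 | h2
    · have hcT : (Icc (max i l) (j-1)).card = j - l := by
        simp only [Nat.card_Icc]; omega
      have hw : wgt n i j l = 2 * ((i:ℝ) - 1) * ((n:ℝ) + 2 - 2 * l) := by
        unfold wgt; rw [if_neg (by omega), if_neg (by omega), if_pos h2]
      have e1 : (if l = j then c l else 0) = 0 := if_neg (by omega)
      have e2 : (if l = i then c l else 0) = 0 := if_neg (by omega)
      rw [hcT, hw, e1, e2]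
      push_cast [Nat.cast_sub (by omega : l ≤ j), Nat.cast_sub (by omega : l ≤ n + 1),
        Nat.cast_sub (by omega : i ≤ j)]
      linear_combination (2 * c l * ((l:ℝ) - 1)) * hR
    · have hcT : (Icc (max i l) (j-1)).card = 0 := by
        simp only [Nat.card_Icc]; omega
      have hw : wgt n i j l = 0 := by
        unfold wgt; rw [if_neg (by omega), if_neg (by omega), if_neg (by omega), if_pos h2]
      have e1 : (if l = j then c l else 0) = c l := if_pos h2
      have e2 : (if l = i then c l else 0) = 0 := if_neg (by omega)
      rw [hcT, hw, e1, e2]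
      have hlR : (l:ℝ) = j := by exact_mod_cast congrArg (Nat.cast (R := ℝ)) h2
      push_cast [Nat.cast_sub (by omega : l ≤ n + 1)]
      linear_combination (((j:ℝ) - i) * c l) * hR + (2 * ((j:ℝ) - i) * c l) * hlR
    · have hcT : (Icc (max i l) (j-1)).card = 0 := by
        simp only [Nat.card_Icc]; omega
      have hw : wgt n i j l = (-2) * ((j:ℝ) - i) * ((n:ℝ) + 1 - l) := by
        unfold wgt
        rw [if_neg (by omega), if_neg (by omega), if_neg (by omega), if_neg (by omega)]
      have e1 : (if l = j then c l else 0) = 0 := if_neg (by omega)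
      have e2 : (if l = i then c l else 0) = 0 := if_neg (by omega)
      rw [hcT, hw, e1, e2]
      push_cast [Nat.cast_sub (by omega : l ≤ n + 1)]
      ring

lemma keyR (n i j : ℕ) (c : ℕ → ℝ) (hn : 2 ≤ n) (hi : 1 ≤ i) (hij : i < j) (hj : j ≤ n)
    (hsum : i + j = n + 2) :
    2 * (((n:ℝ) + 2 - 2 * i) *
          (∑ k ∈ Icc 2 (i-1), ((k:ℝ) - 1) * (c k - c (n + 2 - k)))
        + ((i:ℝ) - 1) *
          (∑ k ∈ Icc (i+1) ((n+1)/2), ((n:ℝ) + 2 - 2 * k) * (c k - c (n + 2 - k))))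
    = ∑ l ∈ Icc 1 n, wgt n i j l * c l := by
  have hR : (i:ℝ) + j = (n:ℝ) + 2 := by exact_mod_cast congrArg (Nat.cast (R := ℝ)) hsum
  have hi2 : 2 ≤ i := by omega
  have hA : ∑ k ∈ Icc 2 (i-1), ((k:ℝ) - 1) * (c k - c (n + 2 - k))
      = ∑ l ∈ Icc 1 n, (if 2 ≤ l ∧ l ≤ i - 1 then ((l:ℝ) - 1) * c l else 0)
        - ∑ l ∈ Icc 1 n, (if j + 1 ≤ l ∧ l ≤ n then ((n:ℝ) + 1 - l) * c l else 0) := by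
    rw [sum_ite_Icc 2 (i-1) n (by omega) (by omega), sum_ite_Icc (j+1) n n (by omega) le_rfl]
    rw [Finset.sum_congr rfl
      (fun (k : ℕ) _ => mul_sub ((k:ℝ) - 1) (c k) (c (n + 2 - k))), Finset.sum_sub_distrib]
    congr 1
    have h1 : ∀ k ∈ Icc 2 (i-1), ((k:ℝ) - 1) * c (n + 2 - k)
        = (fun l : ℕ => ((n:ℝ) + 1 - (l:ℝ)) * c l) (n + 2 - k) := by
      intro k hk; simp only [mem_Icc] at hk
      simp only []
      rw [Nat.cast_sub (by omega : k ≤ n + 2)]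
      push_cast
      ring_nf
    rw [Finset.sum_congr rfl h1, sum_mirror n 2 (i-1) (by omega) (fun l : ℕ => ((n:ℝ) + 1 - (l:ℝ)) * c l),
      show n + 2 - (i-1) = j + 1 by omega, show n + 2 - 2 = n by omega]
  have hB : ∑ k ∈ Icc (i+1) ((n+1)/2), ((n:ℝ) + 2 - 2 * k) * (c k - c (n + 2 - k))
      = ∑ l ∈ Icc 1 n, (if i + 1 ≤ l ∧ l ≤ (n+1)/2 then ((n:ℝ) + 2 - 2 * l) * c l else 0)
        - ∑ l ∈ Icc 1 n,
            (if n + 2 - (n+1)/2 ≤ l ∧ l ≤ j - 1 then (2 * (l:ℝ) - ((n:ℝ) + 2)) * c l else 0) := by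
    rw [sum_ite_Icc (i+1) ((n+1)/2) n (by omega) (by omega), sum_ite_Icc (n + 2 - (n+1)/2) (j-1) n (by omega) (by omega)]
    rw [Finset.sum_congr rfl
      (fun (k : ℕ) _ => mul_sub ((n:ℝ) + 2 - 2 * k) (c k) (c (n + 2 - k))), Finset.sum_sub_distrib]
    congr 1
    have h1 : ∀ k ∈ Icc (i+1) ((n+1)/2), ((n:ℝ) + 2 - 2 * k) * c (n + 2 - k)
        = (fun l : ℕ => (2 * (l:ℝ) - ((n:ℝ) + 2)) * c l) (n + 2 - k) := by
      intro k hk; simp only [mem_Icc] at hk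
      simp only []
      rw [Nat.cast_sub (by omega : k ≤ n + 2)]
      push_cast
      ring_nf
    rw [Finset.sum_congr rfl h1, sum_mirror n (i+1) ((n+1)/2) (by omega) (fun l : ℕ => (2 * (l:ℝ) - ((n:ℝ) + 2)) * c l),
      show n + 2 - (i+1) = j - 1 by omega]
  rw [hA, hB, mul_sub, mul_sub, Finset.mul_sum, Finset.mul_sum, Finset.mul_sum, Finset.mul_sum,
    ← Finset.sum_sub_distrib, ← Finset.sum_sub_distrib, ← Finset.sum_add_distrib,
    Finset.mul_sum]
  refine Finset.sum_congr rfl fun l hl => ?_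
  simp only [mem_Icc] at hl
  obtain ⟨hl1, hl2⟩ := hl
  rcases lt_trichotomy l i with h | h | h
  · have eP2 : (if j + 1 ≤ l ∧ l ≤ n then ((n:ℝ) + 1 - l) * c l else 0) = 0 := if_neg (by omega)
    have eP3 : (if i + 1 ≤ l ∧ l ≤ (n+1)/2 then ((n:ℝ) + 2 - 2 * l) * c l else 0) = 0 :=
      if_neg (by omega)
    have eP4 : (if n + 2 - (n+1)/2 ≤ l ∧ l ≤ j - 1 then (2 * (l:ℝ) - ((n:ℝ) + 2)) * c l else 0)
        = 0 := if_neg (by omega)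
    have hw : wgt n i j l = 2 * ((j:ℝ) - i) * ((l:ℝ) - 1) := by
      unfold wgt; rw [if_pos h]
    rcases eq_or_lt_of_le hl1 with h1 | h1
    · have eP1 : (if 2 ≤ l ∧ l ≤ i - 1 then ((l:ℝ) - 1) * c l else 0) = 0 := if_neg (by omega)
      have hlR : (l:ℝ) = 1 := by exact_mod_cast congrArg (Nat.cast (R := ℝ)) h1.symm
      rw [eP1, eP2, eP3, eP4, hw]
      linear_combination (-2 * ((j:ℝ) - i) * c l) * hlR
    · have eP1 : (if 2 ≤ l ∧ l ≤ i - 1 then ((l:ℝ) - 1) * c l else 0)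
          = ((l:ℝ) - 1) * c l := if_pos (by omega)
      rw [eP1, eP2, eP3, eP4, hw]
      linear_combination (-(2 * ((l:ℝ) - 1) * c l)) * hR
  · have eP1 : (if 2 ≤ l ∧ l ≤ i - 1 then ((l:ℝ) - 1) * c l else 0) = 0 := if_neg (by omega)
    have eP2 : (if j + 1 ≤ l ∧ l ≤ n then ((n:ℝ) + 1 - l) * c l else 0) = 0 := if_neg (by omega)
    have eP3 : (if i + 1 ≤ l ∧ l ≤ (n+1)/2 then ((n:ℝ) + 2 - 2 * l) * c l else 0) = 0 :=
      if_neg (by omega)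
    have eP4 : (if n + 2 - (n+1)/2 ≤ l ∧ l ≤ j - 1 then (2 * (l:ℝ) - ((n:ℝ) + 2)) * c l else 0)
        = 0 := if_neg (by omega)
    have hw : wgt n i j l = 0 := by
      unfold wgt; rw [if_neg (by omega), if_pos h]
    rw [eP1, eP2, eP3, eP4, hw]
    ring
  · rcases lt_trichotomy l j with h2 | h2 | h2
    · have eP1 : (if 2 ≤ l ∧ l ≤ i - 1 then ((l:ℝ) - 1) * c l else 0) = 0 := if_neg (by omega)
      have eP2 : (if j + 1 ≤ l ∧ l ≤ n then ((n:ℝ) + 1 - l) * c l else 0) = 0 := if_neg (by omega)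
      have hw : wgt n i j l = 2 * ((i:ℝ) - 1) * ((n:ℝ) + 2 - 2 * l) := by
        unfold wgt; rw [if_neg (by omega), if_neg (by omega), if_pos h2]
      rcases le_or_gt l ((n+1)/2) with h3 | h3
      · have eP3 : (if i + 1 ≤ l ∧ l ≤ (n+1)/2 then ((n:ℝ) + 2 - 2 * l) * c l else 0)
            = ((n:ℝ) + 2 - 2 * l) * c l := if_pos (by omega)
        have eP4 : (if n + 2 - (n+1)/2 ≤ l ∧ l ≤ j - 1 then (2 * (l:ℝ) - ((n:ℝ) + 2)) * c l else 0)
            = 0 := if_neg (by omega)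
        rw [eP1, eP2, eP3, eP4, hw]
        ring
      · rcases le_or_gt (n + 2 - (n+1)/2) l with h4 | h4
        · have eP3 : (if i + 1 ≤ l ∧ l ≤ (n+1)/2 then ((n:ℝ) + 2 - 2 * l) * c l else 0) = 0 :=
            if_neg (by omega)
          have eP4 : (if n + 2 - (n+1)/2 ≤ l ∧ l ≤ j - 1 then (2 * (l:ℝ) - ((n:ℝ) + 2)) * c l
              else 0) = (2 * (l:ℝ) - ((n:ℝ) + 2)) * c l := if_pos (by omega)
          rw [eP1, eP2, eP3, eP4, hw]
          ring
        · have eP3 : (if i + 1 ≤ l ∧ l ≤ (n+1)/2 then ((n:ℝ) + 2 - 2 * l) * c l else 0) = 0 :=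
            if_neg (by omega)
          have eP4 : (if n + 2 - (n+1)/2 ≤ l ∧ l ≤ j - 1 then (2 * (l:ℝ) - ((n:ℝ) + 2)) * c l
              else 0) = 0 := if_neg (by omega)
          have h2l : 2 * l = n + 2 := by omega
          have h2lR : 2 * (l:ℝ) = (n:ℝ) + 2 := by
            exact_mod_cast congrArg (Nat.cast (R := ℝ)) h2l
          rw [eP1, eP2, eP3, eP4, hw]
          linear_combination (2 * ((i:ℝ) - 1) * c l) * h2lR
    · have eP1 : (if 2 ≤ l ∧ l ≤ i - 1 then ((l:ℝ) - 1) * c l else 0) = 0 := if_neg (by omega)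
      have eP2 : (if j + 1 ≤ l ∧ l ≤ n then ((n:ℝ) + 1 - l) * c l else 0) = 0 := if_neg (by omega)
      have eP3 : (if i + 1 ≤ l ∧ l ≤ (n+1)/2 then ((n:ℝ) + 2 - 2 * l) * c l else 0) = 0 :=
        if_neg (by omega)
      have eP4 : (if n + 2 - (n+1)/2 ≤ l ∧ l ≤ j - 1 then (2 * (l:ℝ) - ((n:ℝ) + 2)) * c l else 0)
          = 0 := if_neg (by omega)
      have hw : wgt n i j l = 0 := by
        unfold wgt; rw [if_neg (by omega), if_neg (by omega), if_neg (by omega), if_pos h2]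
      rw [eP1, eP2, eP3, eP4, hw]
      ring
    · have eP1 : (if 2 ≤ l ∧ l ≤ i - 1 then ((l:ℝ) - 1) * c l else 0) = 0 := if_neg (by omega)
      have eP2 : (if j + 1 ≤ l ∧ l ≤ n then ((n:ℝ) + 1 - l) * c l else 0)
          = ((n:ℝ) + 1 - l) * c l := if_pos (by omega)
      have eP3 : (if i + 1 ≤ l ∧ l ≤ (n+1)/2 then ((n:ℝ) + 2 - 2 * l) * c l else 0) = 0 :=
        if_neg (by omega)
      have eP4 : (if n + 2 - (n+1)/2 ≤ l ∧ l ≤ j - 1 then (2 * (l:ℝ) - ((n:ℝ) + 2)) * c l else 0)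
          = 0 := if_neg (by omega)
      have hw : wgt n i j l = (-2) * ((j:ℝ) - i) * ((n:ℝ) + 1 - l) := by
        unfold wgt
        rw [if_neg (by omega), if_neg (by omega), if_neg (by omega), if_neg (by omega)]
      rw [eP1, eP2, eP3, eP4, hw]
      linear_combination (2 * ((n:ℝ) + 1 - (l:ℝ)) * c l) * hR

/-- explicit value of the change of the objective under an
(i,j)-interchange with `i + j = n + 2`. -/
theorem varPS_swap_diff_sum_eq_n_add_two (n : ℕ) (hn : 2 ≤ n) (c : ℕ → ℝ) (i j : ℕ)
    (hi : 1 ≤ i) (hij : i < j) (hj : j ≤ n) (hsum : i + j = n + 2) :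
    varPS n (swapSeq c i j) - varPS n c =
      2 * (c (n + 2 - i) - c i) / (n : ℝ) ^ 2 *
        (((n : ℝ) + 2 - 2 * (i : ℝ)) *
            ∑ k ∈ Finset.Icc 2 (i - 1), ((k : ℝ) - 1) * (c k - c (n + 2 - k))
          + ((i : ℝ) - 1) *
            ∑ k ∈ Finset.Icc (i + 1) ((n + 1) / 2),
              ((n : ℝ) + 2 - 2 * (k : ℝ)) * (c k - c (n + 2 - k))) := by
  have hn0 : (n:ℝ) ≠ 0 := by positivity
  rw [show n + 2 - i = j from by omega]
  set d : ℝ := c j - c i with hd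
  set mR : ℝ := (j:ℝ) - i with hmR
  set T : ℝ := ∑ k ∈ Icc i (j-1), partSum c k with hT
  set S : ℝ := ∑ k ∈ Icc 1 n, partSum c k with hS
  have hps : ∀ k, partSum (swapSeq c i j) k
      = partSum c k + (if i ≤ k ∧ k < j then d else 0) :=
    fun k => partSum_swap c i j k hi hij
  have hcond : ∀ k : ℕ, (i ≤ k ∧ k < j) = (i ≤ k ∧ k ≤ j - 1) :=
    fun k => propext (by omega)
  have hδ : ∑ k ∈ Icc 1 n, (if i ≤ k ∧ k < j then d else 0) = mR * d := by
    simp only [hcond]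
    rw [sum_ite_Icc i (j-1) n hi (by omega) (fun _ => d), Finset.sum_const, nsmul_eq_mul,
      Nat.card_Icc, show j - 1 + 1 - i = j - i from by omega,
      Nat.cast_sub (by omega : i ≤ j), hmR]
  have hδs : ∑ k ∈ Icc 1 n, (if i ≤ k ∧ k < j then d else 0) * partSum c k = d * T := by
    have h1 : ∀ k ∈ Icc 1 n, (if i ≤ k ∧ k < j then d else 0) * partSum c k
        = (if i ≤ k ∧ k ≤ j - 1 then d * partSum c k else 0) := by
      intro k _
      rw [ite_mul, zero_mul]
      simp only [hcond]
    rw [Finset.sum_congr rfl h1,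
      sum_ite_Icc i (j-1) n hi (by omega) (fun k => d * partSum c k), ← Finset.mul_sum]
  have hδ2 : ∑ k ∈ Icc 1 n, (if i ≤ k ∧ k < j then d else 0) ^ 2 = mR * d ^ 2 := by
    have h1 : ∀ k ∈ Icc 1 n, (if i ≤ k ∧ k < j then d else 0) ^ 2
        = (if i ≤ k ∧ k ≤ j - 1 then d ^ 2 else 0) := by
      intro k _
      simp only [hcond]
      split <;> ring
    rw [Finset.sum_congr rfl h1,
      sum_ite_Icc i (j-1) n hi (by omega) (fun _ => d ^ 2), Finset.sum_const, nsmul_eq_mul,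
      Nat.card_Icc, show j - 1 + 1 - i = j - i from by omega,
      Nat.cast_sub (by omega : i ≤ j), hmR]
  have hmean : meanPS n (swapSeq c i j) = meanPS n c + mR * d / n := by
    unfold meanPS
    rw [Finset.sum_congr rfl (fun k _ => hps k), Finset.sum_add_distrib, hδ, ← hS]
    ring
  have hsq : ∑ k ∈ Icc 1 n, (partSum (swapSeq c i j) k) ^ 2
      = (∑ k ∈ Icc 1 n, (partSum c k) ^ 2) + 2 * (d * T) + mR * d ^ 2 := by
    have h1 : ∀ k ∈ Icc 1 n, (partSum (swapSeq c i j) k) ^ 2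
        = (partSum c k) ^ 2 + 2 * ((if i ≤ k ∧ k < j then d else 0) * partSum c k)
          + (if i ≤ k ∧ k < j then d else 0) ^ 2 := by
      intro k _
      rw [hps k]
      ring
    rw [Finset.sum_congr rfl h1, Finset.sum_add_distrib, Finset.sum_add_distrib,
      ← Finset.mul_sum, hδs, hδ2]
  have hkey : 2 * (((n:ℝ) + 2 - 2 * i) *
          (∑ k ∈ Icc 2 (i-1), ((k:ℝ) - 1) * (c k - c (n + 2 - k)))
        + ((i:ℝ) - 1) *
          (∑ k ∈ Icc (i+1) ((n+1)/2), ((n:ℝ) + 2 - 2 * k) * (c k - c (n + 2 - k))))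
      = 2 * ((n:ℝ) * T - mR * S) + mR * ((n:ℝ) - mR) * d :=
    (keyR n i j c hn hi hij hj hsum).trans (keyL n i j c hi hij hj hsum).symm
  rw [varPS_eq n (by omega) (swapSeq c i j), varPS_eq n (by omega) c, hmean, hsq]
  have hmS : meanPS n c = S / n := by
    unfold meanPS; rw [← hS]; ring
  rw [hmS]
  rw [show 2 * d / (n:ℝ) ^ 2 *
        (((n : ℝ) + 2 - 2 * (i : ℝ)) *
            ∑ k ∈ Finset.Icc 2 (i - 1), ((k : ℝ) - 1) * (c k - c (n + 2 - k))
          + ((i : ℝ) - 1) *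
            ∑ k ∈ Finset.Icc (i + 1) ((n + 1) / 2),
              ((n : ℝ) + 2 - 2 * (k : ℝ)) * (c k - c (n + 2 - k)))
      = d / (n:ℝ) ^ 2 *
        (2 * (((n:ℝ) + 2 - 2 * i) *
          (∑ k ∈ Icc 2 (i-1), ((k:ℝ) - 1) * (c k - c (n + 2 - k)))
        + ((i:ℝ) - 1) *
          (∑ k ∈ Icc (i+1) ((n+1)/2), ((n:ℝ) + 2 - 2 * k) * (c k - c (n + 2 - k))))) from by ring]
  rw [hkey]
  field_simp
  ring
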